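/- Let p be a prime with p ≡ 1 (mod 8), and write p = a^2 + b^2 with a odd, normalized so that the Gaussian integer π = a + bi satisfies π ≡ 1 (mod (-2+2i)). Then the number of F_p-points of the elliptic curve E_3: Y^2 = X^3 - X equals p + 1 - 2a. In particular, N_p(E_3) = p - 1 if and only if p = 1 + 4a'^2 for some integer a' (equivalently a = 1). -/

import Mathlib

open Finset

namespace PCVG

variable {p : ℕ} [Fact p.Prime]


noncomputable def J (p : ℕ) [Fact p.Prime] (a : ZMod p) : ℤ :=
  ∑ x : ZMod p, quadraticChar (ZMod p) x * quadraticChar (ZMod p) (x ^ 2 + a)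

lemma char_ne_two (hp2 : p ≠ 2) : ringChar (ZMod p) ≠ 2 := by
  rw [ZMod.ringChar_zmod_n]; exact_mod_cast hp2

lemma chi_neg_one (h8 : p % 8 = 1) : quadraticChar (ZMod p) (-1) = 1 := by
  have h4 : p % 4 ≠ 3 := by omega
  have : IsSquare (-1 : ZMod p) := (ZMod.exists_sq_eq_neg_one_iff (p := p)).2 h4
  exact (quadraticChar_one_iff_isSquare (by simp)).2 this

lemma chi_sq_arg {x : ZMod p} (hx : x ≠ 0) : quadraticChar (ZMod p) (x ^ 2) = 1 :=
  quadraticChar_sq_one' hx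

lemma sum_shift (hp2 : p ≠ 2) {w : ZMod p} (hw : w ≠ 0) :
    ∑ b : ZMod p, quadraticChar (ZMod p) b * quadraticChar (ZMod p) (b + w) = -1 := by
  set χ := quadraticChar (ZMod p)
  have h1 : ∀ b : ZMod p, b ≠ 0 → χ b * χ (b + w) = χ (1 + w * b⁻¹) := by
    intro b hb
    have : b + w = b * (1 + w * b⁻¹) := by field_simp
    rw [this, map_mul, ← mul_assoc, ← sq, quadraticChar_sq_one hb, one_mul]
  rw [← Finset.sum_erase_add _ _ (mem_univ (0 : ZMod p))]
  rw [Finset.sum_congr rfl (fun b hb => h1 b (Finset.ne_of_mem_erase hb))]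
  have h2 : ∑ b ∈ univ.erase (0 : ZMod p), χ (1 + w * b⁻¹)
      = ∑ c ∈ univ.erase (1 : ZMod p), χ c := by
    apply Finset.sum_nbij' (fun b => 1 + w * b⁻¹) (fun c => w * (c - 1)⁻¹)
    · intro b hb
      have hb0 : b ≠ 0 := Finset.ne_of_mem_erase hb
      simp only [mem_erase, mem_univ, and_true]
      intro h
      apply hb0
      have : w * b⁻¹ = 0 := by linear_combination h
      rcases mul_eq_zero.1 this with h' | h'
      · exact absurd h' hw
      · exact inv_eq_zero.1 h' |>.symm ▸ rfl
    · intro c hc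
      have hc1 : c ≠ 1 := Finset.ne_of_mem_erase hc
      simp only [mem_erase, mem_univ, and_true]
      exact mul_ne_zero hw (inv_ne_zero (sub_ne_zero.2 hc1))
    · intro b hb
      have hb0 : b ≠ 0 := Finset.ne_of_mem_erase hb
      field_simp
      rw [add_sub_cancel_left, div_self hw]
    · intro c hc
      have hc1 : c ≠ 1 := Finset.ne_of_mem_erase hc
      have : c - 1 ≠ 0 := sub_ne_zero.2 hc1
      field_simp
      ring
    · intro b hb; rfl
  rw [h2]
  have h3 : ∑ c ∈ univ.erase (1 : ZMod p), χ c = (∑ c : ZMod p, χ c) - χ 1 := by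
    rw [← Finset.sum_erase_add _ _ (mem_univ (1 : ZMod p))]; ring
  rw [h3, quadraticChar_sum_zero (char_ne_two hp2)]
  simp [χ]

lemma sum_two_shift (hp2 : p ≠ 2) (u v : ZMod p) :
    ∑ x : ZMod p, quadraticChar (ZMod p) ((x + u) * (x + v))
      = if u = v then ((p : ℤ) - 1) else -1 := by
  set χ := quadraticChar (ZMod p)
  have key : ∑ x : ZMod p, χ ((x + u) * (x + v)) = ∑ b : ZMod p, χ (b * (b + (v - u))) := by
    apply Finset.sum_nbij' (fun x => x + u) (fun b => b - u) <;>
      intro x _ <;> simp <;> ring_nf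
  rw [key]
  by_cases huv : u = v
  · subst huv
    simp only [sub_self, add_zero, if_pos rfl, ← sq]
    have : ∀ b : ZMod p, χ (b ^ 2) = if b = 0 then 0 else 1 := by
      intro b
      by_cases hb : b = 0
      · simp [hb, χ, quadraticChar_zero]
      · simp [hb, chi_sq_arg hb]
        exact quadraticChar_dichotomy hb
    rw [Finset.sum_congr rfl (fun b _ => this b)]
    rw [Finset.sum_ite, Finset.sum_const, Finset.sum_const]
    have h0 : (univ.filter (fun b : ZMod p => ¬ b = 0)) = univ.erase 0 := by
      ext b; simp [Finset.mem_erase, and_comm]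
    have hp1 : 1 ≤ p := (Fact.out : p.Prime).one_lt.le
    rw [h0, Finset.card_erase_of_mem (mem_univ _), Finset.card_univ, ZMod.card]
    simp only [smul_eq_mul, mul_zero, mul_one, zero_add, if_true]
    have : ((p - 1 : ℕ) : ℤ) = (p : ℤ) - 1 := by omega
    simp [this]
  · rw [if_neg huv]
    have hw : v - u ≠ 0 := sub_ne_zero.2 (Ne.symm huv)
    rw [← sum_shift hp2 hw]
    exact Finset.sum_congr rfl fun b _ => by rw [map_mul]

lemma J_zero (hp2 : p ≠ 2) : J p 0 = 0 := by
  have : ∀ x : ZMod p, quadraticChar (ZMod p) x * quadraticChar (ZMod p) (x ^ 2 + 0)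
      = quadraticChar (ZMod p) x := by
    intro x
    by_cases hx : x = 0
    · simp [hx, quadraticChar_zero]
    · rw [add_zero, chi_sq_arg hx, mul_one]
  rw [J, Finset.sum_congr rfl (fun x _ => this x)]
  exact quadraticChar_sum_zero (char_ne_two hp2)

lemma J_sq_mul {t : ZMod p} (ht : t ≠ 0) (u : ZMod p) :
    J p (t ^ 2 * u) = quadraticChar (ZMod p) t * J p u := by
  set χ := quadraticChar (ZMod p)
  rw [J, J, Finset.mul_sum]
  apply Finset.sum_nbij' (fun x => t⁻¹ * x) (fun y => t * y)
  · intro x _; exact mem_univ _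
  · intro y _; exact mem_univ _
  · intro x _; field_simp
  · intro y _; field_simp
  · intro x _
    have : x ^ 2 + t ^ 2 * u = t ^ 2 * ((t⁻¹ * x) ^ 2 + u) := by field_simp
    rw [this, map_mul (χ), map_mul (χ), chi_sq_arg ht]
    have hxx : χ x = χ t * χ (t⁻¹ * x) := by
      rw [← map_mul]
      congr 1
      field_simp
    have h1 : χ t * χ t⁻¹ = 1 := by
      rw [← map_mul, mul_inv_cancel₀ ht, map_one]
    rw [hxx]
    linear_combination (-(χ t * χ (t⁻¹ * x) * χ ((t⁻¹ * x) ^ 2 + u))) * h1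

lemma resum (hp2 : p ≠ 2) (h : ZMod p → ℤ) :
    ∑ t : ZMod p, h (t ^ 2) = ∑ a : ZMod p, (quadraticChar (ZMod p) a + 1) * h a := by
  set χ := quadraticChar (ZMod p)
  rw [Finset.sum_comp h (fun t : ZMod p => t ^ 2)]
  have hcard : ∀ b : ZMod p, ((univ.filter fun t : ZMod p => t ^ 2 = b).card : ℤ) = χ b + 1 := by
    intro b
    have := quadraticChar_card_sqrts (char_ne_two hp2) b
    rwa [Set.toFinset_setOf] at this
  have hstep : ∀ b ∈ (univ : Finset (ZMod p)).image (fun t : ZMod p => t ^ 2),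
      ((univ.filter fun t : ZMod p => t ^ 2 = b).card • h b : ℤ) = (χ b + 1) * h b := by
    intro b _
    rw [nsmul_eq_mul, hcard b]
  rw [Finset.sum_congr rfl hstep]
  apply Finset.sum_subset (Finset.subset_univ _)
  intro b _ hb
  have hsq : ¬ IsSquare b := by
    rintro ⟨r, rfl⟩
    exact hb (Finset.mem_image.2 ⟨r, mem_univ r, sq r⟩)
  have : χ b = -1 := quadraticChar_neg_one_iff_not_isSquare.2 hsq
  rw [this]; ring

lemma sum_chi_sq (hp2 : p ≠ 2) : ∑ x : ZMod p, (quadraticChar (ZMod p) x)^2 = (p : ℤ) - 1 := by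
  set χ := quadraticChar (ZMod p)
  have : ∀ x : ZMod p, (χ x)^2 = if x = 0 then 0 else 1 := by
    intro x
    by_cases hx : x = 0
    · simp [hx, χ, quadraticChar_zero]
    · simp [hx, quadraticChar_sq_one hx]
      exact quadraticChar_dichotomy hx
  rw [Finset.sum_congr rfl (fun x _ => this x), Finset.sum_ite, Finset.sum_const,
    Finset.sum_const]
  have h0 : (univ.filter (fun b : ZMod p => ¬ b = 0)) = univ.erase 0 := by
    ext b; simp [Finset.mem_erase, and_comm]
  have hp1 : 1 ≤ p := (Fact.out : p.Prime).one_lt.le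
  rw [h0, Finset.card_erase_of_mem (mem_univ _), Finset.card_univ, ZMod.card]
  have : ((p - 1 : ℕ) : ℤ) = (p : ℤ) - 1 := by omega
  simp [this]

lemma sum_J_sq (hp2 : p ≠ 2) (h8 : p % 8 = 1) :
    ∑ a : ZMod p, (J p a) ^ 2 = 2 * p * (p - 1) := by
  set χ := quadraticChar (ZMod p) with hχ
  have step1 : ∀ a : ZMod p, (J p a)^2
      = ∑ x : ZMod p, ∑ y : ZMod p, χ x * χ y * (χ (x^2+a) * χ (y^2+a)) := by
    intro a
    rw [J, sq, Finset.sum_mul_sum]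
    exact Finset.sum_congr rfl fun x _ => Finset.sum_congr rfl fun y _ => by ring
  rw [Finset.sum_congr rfl (fun a _ => step1 a), Finset.sum_comm]
  have swap2 : ∀ x : ZMod p, ∑ a : ZMod p, ∑ y : ZMod p, χ x * χ y * (χ (x^2+a) * χ (y^2+a))
      = ∑ y : ZMod p, ∑ a : ZMod p, χ x * χ y * (χ (x^2+a) * χ (y^2+a)) :=
    fun x => Finset.sum_comm
  rw [Finset.sum_congr rfl (fun x _ => swap2 x)]
  have inner : ∀ x y : ZMod p, ∑ a : ZMod p, χ x * χ y * (χ (x^2+a) * χ (y^2+a))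
      = χ x * χ y * (if x^2 = y^2 then ((p:ℤ) - 1) else -1) := by
    intro x y
    rw [← Finset.mul_sum]
    congr 1
    have : ∀ a : ZMod p, χ (x^2+a) * χ (y^2+a) = χ ((a + x^2) * (a + y^2)) := by
      intro a; rw [map_mul]; congr 1 <;> ring
    rw [Finset.sum_congr rfl (fun a _ => this a), sum_two_shift hp2]
  rw [Finset.sum_congr rfl (fun x _ => Finset.sum_congr rfl (fun y _ => inner x y))]
  have split : ∀ x y : ZMod p, χ x * χ y * (if x^2 = y^2 then ((p:ℤ) - 1) else -1)
      = (if x^2 = y^2 then (p:ℤ) * (χ x * χ y) else 0) - χ x * χ y := by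
    intro x y
    by_cases h : x^2 = y^2 <;> simp [h] <;> ring
  rw [Finset.sum_congr rfl (fun x _ => Finset.sum_congr rfl (fun y _ => split x y))]
  have expand : ∀ x : ZMod p,
      ∑ y : ZMod p, ((if x^2 = y^2 then (p:ℤ) * (χ x * χ y) else 0) - χ x * χ y)
      = (p:ℤ) * χ x * (χ x + χ (-x)) - χ x * ∑ y : ZMod p, χ y := by
    intro x
    rw [Finset.sum_sub_distrib, ← Finset.mul_sum]
    congr 1
    have hfil : ∑ y : ZMod p, (if x^2 = y^2 then (p:ℤ) * (χ x * χ y) else 0)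
        = (p:ℤ) * χ x * ∑ y ∈ univ.filter (fun y : ZMod p => x^2 = y^2), χ y := by
      rw [← Finset.sum_filter, Finset.mul_sum]
      exact Finset.sum_congr rfl fun y _ => by ring
    rw [hfil]
    congr 1
    have hset : univ.filter (fun y : ZMod p => x^2 = y^2) = {x, -x} := by
      ext y
      simp only [Finset.mem_filter, mem_univ, true_and, Finset.mem_insert, Finset.mem_singleton]
      rw [eq_comm, sq_eq_sq_iff_eq_or_eq_neg]
    rw [hset]
    by_cases hx : x = 0
    · simp [hx, χ, quadraticChar_zero]
    · have hxne : x ≠ -x := by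
        intro h
        apply hx
        have h2 : (2 : ZMod p) * x = 0 := by linear_combination h
        rcases mul_eq_zero.1 h2 with h' | h'
        · exact absurd h' (Ring.two_ne_zero (char_ne_two hp2))
        · exact h'
      rw [Finset.sum_pair hxne]
  rw [Finset.sum_congr rfl (fun x _ => expand x), quadraticChar_sum_zero (char_ne_two hp2)]
  have final : ∀ x : ZMod p, (p:ℤ) * χ x * (χ x + χ (-x)) - χ x * 0 = 2 * (p:ℤ) * (χ x)^2 := by
    intro x
    have : χ (-x) = χ x := by
      rw [(by ring : -x = -1 * x), map_mul, chi_neg_one h8, one_mul]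
    rw [this]; ring
  rw [Finset.sum_congr rfl (fun x _ => final x), ← Finset.mul_sum, sum_chi_sq hp2]

lemma J_neg_one_eq :
    J p (-1) = ∑ x : ZMod p, quadraticChar (ZMod p) (x ^ 3 - x) := by
  rw [J]
  apply Finset.sum_congr rfl
  intro x _
  rw [← map_mul]
  congr 1
  ring

lemma cast_pred (hp1 : 1 ≤ p) : ((p - 1 : ℕ) : ℤ) = (p : ℤ) - 1 := by omega

lemma key_identity (hp2 : p ≠ 2) (h8 : p % 8 = 1) {g : ZMod p}
    (hg : quadraticChar (ZMod p) g = -1) :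
    (J p (-1)) ^ 2 + (J p (-g)) ^ 2 = 4 * p := by
  set χ := quadraticChar (ZMod p) with hχdef
  have hp1 : 1 ≤ p := (Fact.out : p.Prime).one_lt.le
  have hA : ∑ t : ZMod p, (J p (-(t^2)))^2 = ((p:ℤ)-1) * (J p (-1))^2 := by
    rw [← Finset.sum_erase_add _ _ (mem_univ (0 : ZMod p))]
    have hterm : ∀ t ∈ univ.erase (0:ZMod p), (J p (-(t^2)))^2 = (J p (-1))^2 := by
      intro t ht
      have ht0 : t ≠ 0 := Finset.ne_of_mem_erase ht
      have h1 : -(t^2) = t^2 * (-1) := by ring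
      rw [h1, J_sq_mul ht0, mul_pow, quadraticChar_sq_one ht0, one_mul]
    have h0 : -((0:ZMod p)^2) = 0 := by ring
    rw [Finset.sum_congr rfl hterm, Finset.sum_const, h0, J_zero hp2,
      Finset.card_erase_of_mem (mem_univ _), Finset.card_univ, ZMod.card]
    simp [nsmul_eq_mul, cast_pred hp1]
  have hB : ∑ t : ZMod p, (J p (-(g * t^2)))^2 = ((p:ℤ)-1) * (J p (-g))^2 := by
    rw [← Finset.sum_erase_add _ _ (mem_univ (0 : ZMod p))]
    have hterm : ∀ t ∈ univ.erase (0:ZMod p), (J p (-(g * t^2)))^2 = (J p (-g))^2 := by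
      intro t ht
      have ht0 : t ≠ 0 := Finset.ne_of_mem_erase ht
      have h1 : -(g * t^2) = t^2 * (-g) := by ring
      rw [h1, J_sq_mul ht0, mul_pow, quadraticChar_sq_one ht0, one_mul]
    have h0 : -(g * (0:ZMod p)^2) = 0 := by ring
    rw [Finset.sum_congr rfl hterm, Finset.sum_const, h0, J_zero hp2,
      Finset.card_erase_of_mem (mem_univ _), Finset.card_univ, ZMod.card]
    simp [nsmul_eq_mul, cast_pred hp1]
  have hgne : g ≠ 0 := by
    intro h
    rw [h] at hg
    simp [χ, quadraticChar_zero] at hg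
  have hA' : ∑ t : ZMod p, (J p (-(t^2)))^2 = ∑ a : ZMod p, (χ a + 1) * (J p (-a))^2 :=
    resum hp2 (fun a => (J p (-a))^2)
  have hB' : ∑ t : ZMod p, (J p (-(g * t^2)))^2 = ∑ a : ZMod p, (χ a + 1) * (J p (-(g*a)))^2 :=
    resum hp2 (fun a => (J p (-(g*a)))^2)
  have htrans : ∑ a : ZMod p, (χ a + 1) * (J p (-(g*a)))^2
      = ∑ b : ZMod p, (1 - χ b) * (J p (-b))^2 := by
    apply Finset.sum_nbij' (fun a => g * a) (fun b => g⁻¹ * b)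
    · intro a _; exact mem_univ _
    · intro b _; exact mem_univ _
    · intro a _; field_simp
    · intro b _; field_simp
    · intro a _
      have : χ (g * a) = - χ a := by rw [map_mul, hg]; ring
      rw [this]
      ring
  have hsum2 : ∑ a : ZMod p, (J p (-a))^2 = ∑ a : ZMod p, (J p a)^2 := by
    apply Finset.sum_nbij' (fun a => -a) (fun b => -b)
    · intro a _; exact mem_univ _
    · intro b _; exact mem_univ _
    · intro a _; simp
    · intro b _; simp
    · intro a _; rfl
  have comb : ((p:ℤ)-1) * ((J p (-1))^2 + (J p (-g))^2) = ((p:ℤ)-1) * (4 * p) := by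
    have lhs : ((p:ℤ)-1) * (J p (-1))^2 + ((p:ℤ)-1) * (J p (-g))^2
        = ∑ a : ZMod p, ((χ a + 1) * (J p (-a))^2 + (1 - χ a) * (J p (-a))^2) := by
      rw [Finset.sum_add_distrib, ← hA', ← htrans, ← hB', hA, hB]
    have rhs : ∑ a : ZMod p, ((χ a + 1) * (J p (-a))^2 + (1 - χ a) * (J p (-a))^2)
        = 2 * ∑ a : ZMod p, (J p a)^2 := by
      rw [← hsum2, Finset.mul_sum]
      exact Finset.sum_congr rfl fun a _ => by ring
    have : ((p:ℤ)-1) * (J p (-1))^2 + ((p:ℤ)-1) * (J p (-g))^2 = 2 * (2 * p * (p - 1)) := by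
      rw [lhs, rhs, sum_J_sq hp2 h8]
    linarith [this]
  have hpne : ((p:ℤ) - 1) ≠ 0 := by
    have : (3:ℕ) ≤ p := by
      have h2 := (Fact.out : p.Prime).two_le
      omega
    have : (3:ℤ) ≤ (p:ℤ) := by exact_mod_cast this
    linarith
  exact mul_left_cancel₀ hpne comb



lemma four_dvd_aux {α : Type*} [DecidableEq α] (n : ℕ) : ∀ (s : Finset α) (f g : α → α),
    (∀ x ∈ s, f x ∈ s) → (∀ x ∈ s, g x ∈ s) →
    (∀ x ∈ s, f (f x) = x) → (∀ x ∈ s, g (g x) = x) →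
    (∀ x ∈ s, f (g x) = g (f x)) →
    (∀ x ∈ s, f x ≠ x) → (∀ x ∈ s, g x ≠ x) → (∀ x ∈ s, f x ≠ g x) →
    s.card = n → 4 ∣ n := by
  induction n using Nat.strong_induction_on with
  | _ n ih =>
    intro s f g hfs hgs hff hgg hcomm hf hg hfg hn
    rcases s.eq_empty_or_nonempty with rfl | ⟨x, hx⟩
    · simp at hn; omega
    · set O : Finset α := {x, f x, g x, f (g x)} with hO
      have hgx : g x ∈ s := hgs x hx
      have hfx : f x ∈ s := hfs x hx
      have hfgx : f (g x) ∈ s := hfs _ hgx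
      have hOsub : O ⊆ s := by
        intro y hy
        simp only [hO, Finset.mem_insert, Finset.mem_singleton] at hy
        rcases hy with rfl | rfl | rfl | rfl <;> assumption
      have d1 : x ≠ f x := (hf x hx).symm
      have d2 : x ≠ g x := (hg x hx).symm
      have d3 : x ≠ f (g x) := by
        intro h
        apply hfg x hx
        have h2 : g x = g (f (g x)) := congrArg g h
        rw [← hcomm _ hgx, hgg _ hx] at h2
        exact h2.symm
      have d4 : f x ≠ g x := hfg x hx
      have d5 : f x ≠ f (g x) := by
        intro h
        apply hg x hx
        have := congrArg f h
        rw [hff _ hx, hff _ hgx] at this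
        exact this.symm
      have d6 : g x ≠ f (g x) := (hf _ hgx).symm
      have hOcard : O.card = 4 := by
        rw [hO]
        rw [Finset.card_insert_of_notMem (by simp [d1, d2, d3]),
          Finset.card_insert_of_notMem (by simp [d4, d5]),
          Finset.card_insert_of_notMem (by simp [d6]), Finset.card_singleton]
      set s' := s \ O with hs'
      have hmem : ∀ y, y ∈ s' ↔ y ∈ s ∧ ¬(y = x ∨ y = f x ∨ y = g x ∨ y = f (g x)) := by
        intro y
        simp [hs', hO, Finset.mem_sdiff]
      have hclf : ∀ y ∈ s', f y ∈ s' := by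
        intro y hy
        rw [hmem] at hy ⊢
        obtain ⟨hys, hyO⟩ := hy
        push_neg at hyO
        obtain ⟨n1, n2, n3, n4⟩ := hyO
        refine ⟨hfs y hys, ?_⟩
        push_neg
        refine ⟨?_, ?_, ?_, ?_⟩
        · intro h; apply n2; have := congrArg f h; rw [hff _ hys] at this; rw [← this]
        · intro h; apply n1; have := congrArg f h; rwa [hff _ hys, hff _ hx] at this
        · intro h; apply n4; have := congrArg f h; rw [hff _ hys] at this; rw [← this]
        · intro h; apply n3; have := congrArg f h; rwa [hff _ hys, hff _ hgx] at this
      have hclg : ∀ y ∈ s', g y ∈ s' := by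
        intro y hy
        rw [hmem] at hy ⊢
        obtain ⟨hys, hyO⟩ := hy
        push_neg at hyO
        obtain ⟨n1, n2, n3, n4⟩ := hyO
        refine ⟨hgs y hys, ?_⟩
        push_neg
        refine ⟨?_, ?_, ?_, ?_⟩
        · intro h; apply n3; have := congrArg g h; rw [hgg _ hys] at this; rw [← this]
        · intro h
          apply n4
          have := congrArg g h
          rw [hgg _ hys, ← hcomm _ hx] at this
          exact this
        · intro h; apply n1; have := congrArg g h; rwa [hgg _ hys, hgg _ hx] at this
        · intro h
          apply n2
          have := congrArg g h
          rw [hgg _ hys, hcomm _ hx, hgg _ hfx] at this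
          exact this
      have hsub' : ∀ y ∈ s', y ∈ s := fun y hy => ((hmem y).1 hy).1
      have hcard' : s'.card = n - 4 := by
        rw [hs', Finset.card_sdiff_of_subset hOsub, hOcard, hn]
      have hn4 : 4 ≤ n := by
        rw [← hn]
        calc 4 = O.card := hOcard.symm
        _ ≤ s.card := Finset.card_le_card hOsub
      have := ih (n - 4) (by omega) s' f g hclf hclg
        (fun y hy => hff y (hsub' y hy)) (fun y hy => hgg y (hsub' y hy))
        (fun y hy => hcomm y (hsub' y hy))
        (fun y hy => hf y (hsub' y hy)) (fun y hy => hg y (hsub' y hy))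
        (fun y hy => hfg y (hsub' y hy)) hcard'
      omega

lemma four_dvd_card {α : Type*} [DecidableEq α] (s : Finset α) (f g : α → α)
    (hfs : ∀ x ∈ s, f x ∈ s) (hgs : ∀ x ∈ s, g x ∈ s)
    (hff : ∀ x ∈ s, f (f x) = x) (hgg : ∀ x ∈ s, g (g x) = x)
    (hcomm : ∀ x ∈ s, f (g x) = g (f x))
    (hf : ∀ x ∈ s, f x ≠ x) (hg : ∀ x ∈ s, g x ≠ x) (hfg : ∀ x ∈ s, f x ≠ g x) :
    4 ∣ s.card :=
  four_dvd_aux s.card s f g hfs hgs hff hgg hcomm hf hg hfg rfl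


lemma S_mod8 (hp2 : p ≠ 2) (h8 : p % 8 = 1) : ∃ k : ℤ, J p (-1) = 8 * k - 2 := by
  set χ := quadraticChar (ZMod p) with hχdef
  have hchar : ringChar (ZMod p) ≠ 2 := char_ne_two hp2
  have h2ne : (2 : ZMod p) ≠ 0 := Ring.two_ne_zero hchar
  have hm1 : IsSquare (-1 : ZMod p) := (ZMod.exists_sq_eq_neg_one_iff (p := p)).2 (by omega)
  obtain ⟨r, hr⟩ := hm1
  set j := r with hjdef
  have hj : j ^ 2 = -1 := by rw [sq]; exact hr.symm
  have hone : (1 : ZMod p) ≠ -1 := (Ring.neg_one_ne_one_of_char_ne_two hchar).symm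
  have hjne : j ≠ 0 := by
    intro h; rw [h] at hj; simp at hj
  have hjsq : IsSquare j := by
    rw [← quadraticChar_one_iff_isSquare hjne]
    rcases quadraticChar_dichotomy (F := ZMod p) hjne with h | h
    · exact h
    · exfalso
      have hpow : (j : ZMod p) ^ (p / 2) = 1 := by
        have h1 : p / 2 = 2 * (p / 4) := by omega
        rw [h1, pow_mul, hj]
        have h2 : p / 4 = 2 * (p / 8) := by omega
        rw [h2, pow_mul, neg_one_sq, one_pow]
      have hcard : Fintype.card (ZMod p) = p := ZMod.card p
      have heq := quadraticChar_eq_pow_of_char_ne_two' hchar j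
      rw [h, hcard, hpow] at heq
      simp at heq
      exact h2ne (by linear_combination -heq)
  have h2sq : IsSquare (2 : ZMod p) := (ZMod.exists_sq_eq_two_iff hp2).2 (Or.inl h8)
  have hmm1sq : IsSquare (-1 : ZMod p) := ⟨r, hr⟩
  -- distinctness
  have hj1 : j ≠ 1 := by intro h; rw [h] at hj; simp at hj; exact hone hj
  have hjm1 : j ≠ -1 := by intro h; rw [h] at hj; simp at hj; exact hone hj
  have hjmj : j ≠ -j := by
    intro h
    apply hjne
    have h2 : (2 : ZMod p) * j = 0 := by linear_combination h
    rcases mul_eq_zero.1 h2 with h' | h'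
    · exact absurd h' h2ne
    · exact h'
  have hmjne : -j ≠ 0 := fun h => hjne (by linear_combination -h)
  have hmj1 : -j ≠ 1 := fun h => hjm1 (by linear_combination -h)
  have hmjm1 : -j ≠ -1 := fun h => hj1 (by linear_combination -h)
  have h0m1 : (0 : ZMod p) ≠ -1 := fun h => one_ne_zero (α := ZMod p) (by linear_combination h)
  have h01 : (0 : ZMod p) ≠ 1 := zero_ne_one
  set E : Finset (ZMod p) := {0, 1, -1, j, -j} with hE
  have hmemE : ∀ x : ZMod p, x ∈ E ↔ (x = 0 ∨ x = 1 ∨ x = -1 ∨ x = j ∨ x = -j) := by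
    intro x; simp [hE]
  have hcardE : E.card = 5 := by
    rw [hE]
    rw [Finset.card_insert_of_notMem (by
      simp only [Finset.mem_insert, Finset.mem_singleton]; push_neg
      exact ⟨h01, h0m1, Ne.symm hjne, Ne.symm hmjne⟩)]
    rw [Finset.card_insert_of_notMem (by
      simp only [Finset.mem_insert, Finset.mem_singleton]; push_neg
      exact ⟨hone, Ne.symm hj1, Ne.symm hmj1⟩)]
    rw [Finset.card_insert_of_notMem (by
      simp only [Finset.mem_insert, Finset.mem_singleton]; push_neg
      exact ⟨Ne.symm hjm1, Ne.symm hmjm1⟩)]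
    rw [Finset.card_insert_of_notMem (by
      simp only [Finset.mem_singleton]; exact hjmj)]
    rw [Finset.card_singleton]
  -- the summand
  have hzeros : ∀ x : ZMod p, (x = 0 ∨ x = 1 ∨ x = -1) → χ (x ^ 3 - x) = 0 := by
    intro x hx
    rcases hx with rfl | rfl | rfl <;>
      · rw [hχdef]
        convert quadraticChar_zero
        ring
  have hEsum : ∑ x ∈ E, χ (x ^ 3 - x) = 2 := by
    rw [hE]
    rw [Finset.sum_insert (by
      simp only [Finset.mem_insert, Finset.mem_singleton]; push_neg
      exact ⟨h01, h0m1, Ne.symm hjne, Ne.symm hmjne⟩)]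
    rw [Finset.sum_insert (by
      simp only [Finset.mem_insert, Finset.mem_singleton]; push_neg
      exact ⟨hone, Ne.symm hj1, Ne.symm hmj1⟩)]
    rw [Finset.sum_insert (by
      simp only [Finset.mem_insert, Finset.mem_singleton]; push_neg
      exact ⟨Ne.symm hjm1, Ne.symm hmjm1⟩)]
    rw [Finset.sum_insert (by
      simp only [Finset.mem_singleton]; exact hjmj)]
    rw [Finset.sum_singleton]
    rw [hzeros 0 (Or.inl rfl), hzeros 1 (Or.inr (Or.inl rfl)), hzeros (-1) (Or.inr (Or.inr rfl))]
    have hjv : j ^ 3 - j = -2 * j := by linear_combination j * hj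
    have hmjv : (-j) ^ 3 - (-j) = 2 * j := by linear_combination (-j) * hj
    have hsq2j : χ (2 * j) = 1 := by
      rw [hχdef]
      rw [quadraticChar_one_iff_isSquare (mul_ne_zero h2ne hjne)]
      exact h2sq.mul hjsq
    have hsqm2j : χ (-2 * j) = 1 := by
      have hne : (-2 : ZMod p) * j ≠ 0 := by
        intro h
        rcases mul_eq_zero.1 h with h' | h'
        · exact h2ne (by linear_combination -h')
        · exact hjne h'
      rw [hχdef, quadraticChar_one_iff_isSquare hne]
      have : (-2 : ZMod p) * j = (-1) * (2 * j) := by ring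
      rw [this]
      exact hmm1sq.mul (h2sq.mul hjsq)
    rw [hjv, hmjv, hsq2j, hsqm2j]
    ring
  -- the complement
  set V : Finset (ZMod p) := univ \ E with hV
  have hmemV : ∀ x : ZMod p, x ∈ V ↔ ¬(x = 0 ∨ x = 1 ∨ x = -1 ∨ x = j ∨ x = -j) := by
    intro x
    rw [hV, Finset.mem_sdiff, hmemE]
    simp
  have hcub_ne : ∀ x : ZMod p, x ∈ V → x ^ 3 - x ≠ 0 := by
    intro x hx h
    rw [hmemV] at hx
    push_neg at hx
    obtain ⟨n0, n1, nm1, _, _⟩ := hx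
    have : x * (x - 1) * (x + 1) = 0 := by linear_combination h
    rcases mul_eq_zero.1 this with h' | h'
    · rcases mul_eq_zero.1 h' with h'' | h''
      · exact n0 h''
      · exact n1 (by linear_combination h'')
    · exact nm1 (by linear_combination h')
  set W : Finset (ZMod p) := V.filter (fun x => χ (x ^ 3 - x) = -1) with hW
  have hVsum : ∑ x ∈ V, χ (x ^ 3 - x) = (V.card : ℤ) - 2 * W.card := by
    have hterm : ∀ x ∈ V, χ (x ^ 3 - x) = 1 - 2 * (if χ (x ^ 3 - x) = -1 then (1:ℤ) else 0) := by
      intro x hx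
      by_cases hc : χ (x ^ 3 - x) = -1
      · rw [hc]
        norm_num
      · have h1 : χ (x ^ 3 - x) = 1 := by
          rcases quadraticChar_dichotomy (F := ZMod p) (hcub_ne x hx) with h | h
          · exact h
          · exact absurd h hc
        rw [h1]
        norm_num
    rw [Finset.sum_congr rfl hterm, Finset.sum_sub_distrib, Finset.sum_const, ← Finset.mul_sum,
      Finset.sum_boole]
    rw [hW]
    simp [nsmul_eq_mul, mul_comm]
  have h4W : 4 ∣ W.card := by
    apply four_dvd_card W (fun x => -x) (fun x => x⁻¹)
    · -- neg closed
      intro x hx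
      rw [hW, Finset.mem_filter] at hx ⊢
      obtain ⟨hxV, hxχ⟩ := hx
      rw [hmemV] at hxV
      push_neg at hxV
      obtain ⟨n0, n1, nm1, nj, nmj⟩ := hxV
      constructor
      · rw [hmemV]
        push_neg
        refine ⟨fun h => n0 (by linear_combination -h), fun h => nm1 (by linear_combination -h),
          fun h => n1 (by linear_combination -h), fun h => nmj (by linear_combination -h),
          fun h => nj (by linear_combination -h)⟩
      · have harg : (-x) ^ 3 - (-x) = (-1) * (x ^ 3 - x) := by ring
        rw [harg, map_mul, chi_neg_one h8, one_mul]
        exact hxχ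
    · -- inv closed
      intro x hx
      rw [hW, Finset.mem_filter] at hx ⊢
      obtain ⟨hxV, hxχ⟩ := hx
      rw [hmemV] at hxV
      push_neg at hxV
      obtain ⟨n0, n1, nm1, nj, nmj⟩ := hxV
      have hjinv : j * (-j) = 1 := by linear_combination -hj
      constructor
      · rw [hmemV]
        push_neg
        refine ⟨fun h => n0 ?_, fun h => n1 ?_, fun h => nm1 ?_, fun h => nmj ?_, fun h => nj ?_⟩
        · rw [← inv_inv x, h, inv_zero]
        · rw [← inv_inv x, h, inv_one]
        · rw [← inv_inv x, h, inv_neg, inv_one]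
        · rw [← inv_inv x, h]
          exact (eq_inv_of_mul_eq_one_left (by linear_combination -hj : (-j) * j = 1)).symm
        · rw [← inv_inv x, h]
          exact (eq_inv_of_mul_eq_one_left (by linear_combination -hj : j * -j = 1)).symm
      · have harg : x⁻¹ ^ 3 - x⁻¹ = (-1) * (x⁻¹ ^ 2) ^ 2 * (x ^ 3 - x) := by
          linear_combination (x⁻¹^3*x^2 + x⁻¹^2*x + x⁻¹ - x⁻¹^3) * (mul_inv_cancel₀ n0)
        rw [harg, map_mul, map_mul, chi_neg_one h8, chi_sq_arg (pow_ne_zero 2 (inv_ne_zero n0)),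
          one_mul, one_mul]
        exact hxχ
    · intro x _; exact neg_neg x
    · intro x _; exact inv_inv x
    · intro x _; rw [inv_neg]
    · -- -x ≠ x
      intro x hx h
      rw [hW, Finset.mem_filter, hmemV] at hx
      push_neg at hx
      apply hx.1.1
      have h2 : (2 : ZMod p) * x = 0 := by linear_combination -h
      rcases mul_eq_zero.1 h2 with h' | h'
      · exact absurd h' h2ne
      · exact h'
    · -- x⁻¹ ≠ x
      intro x hx h
      rw [hW, Finset.mem_filter, hmemV] at hx
      push_neg at hx
      obtain ⟨⟨n0, n1, nm1, _, _⟩, _⟩ := hx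
      have hx2 : x ^ 2 = 1 := by
        have hmi := mul_inv_cancel₀ n0
        rw [h] at hmi
        linear_combination hmi
      have : (x - 1) * (x + 1) = 0 := by linear_combination hx2
      rcases mul_eq_zero.1 this with h' | h'
      · exact n1 (by linear_combination h')
      · exact nm1 (by linear_combination h')
    · -- -x ≠ x⁻¹
      intro x hx h
      rw [hW, Finset.mem_filter, hmemV] at hx
      push_neg at hx
      obtain ⟨⟨n0, n1, nm1, nj, nmj⟩, _⟩ := hx
      have hx2 : x ^ 2 = -1 := by
        have hmi := mul_inv_cancel₀ n0
        rw [← h] at hmi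
        linear_combination -hmi
      have : (x - j) * (x + j) = 0 := by linear_combination hx2 - hj
      rcases mul_eq_zero.1 this with h' | h'
      · exact nj (by linear_combination h')
      · exact nmj (by linear_combination h')
  -- assemble
  obtain ⟨m, hm⟩ := h4W
  have hcardV : V.card = p - 5 := by
    rw [hV, Finset.card_sdiff_of_subset (Finset.subset_univ E), Finset.card_univ, ZMod.card, hcardE]
  have hp9 : 9 ≤ p := by
    have := (Fact.out : p.Prime).two_le
    omega
  have hsplit : J p (-1) = ∑ x ∈ E, χ (x ^ 3 - x) + ∑ x ∈ V, χ (x ^ 3 - x) := by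
    rw [J_neg_one_eq, hχdef]
    rw [← Finset.sum_sdiff (Finset.subset_univ E)]
    exact add_comm _ _
  rw [hEsum, hVsum] at hsplit
  refine ⟨((p : ℤ) - 5 - 2 * (4 * m) + 2 + 2) / 8, ?_⟩
  have hVc : (V.card : ℤ) = (p : ℤ) - 5 := by
    rw [hcardV]
    omega
  have hWc : (W.card : ℤ) = 4 * (m : ℤ) := by exact_mod_cast hm
  rw [hsplit, hVc, hWc]
  have hp8 : (p : ℤ) % 8 = 1 := by omega
  omega


lemma odd_sq (x : ℤ) (hx : Odd x) : ∃ d : ℤ, x ^ 2 = 8 * d + 1 := by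
  obtain ⟨c, rfl⟩ := hx
  rcases Int.even_or_odd c with ⟨e, rfl⟩ | ⟨e, rfl⟩
  · exact ⟨2 * e ^ 2 + e, by ring⟩
  · exact ⟨2 * e ^ 2 + 3 * e + 1, by ring⟩

lemma two_sq_unique {q a b c d : ℤ} (hq : Prime q) (h1 : a ^ 2 + b ^ 2 = q)
    (h2 : c ^ 2 + d ^ 2 = q) (hao : Odd a) (hco : Odd c) (hbe : Even b) (hde : Even d)
    (ha4 : a % 4 = 1) (hc4 : c % 4 = 1) : a = c := by
  have key : (a * c + b * d) * (a * c - b * d) = q * (a ^ 2 + c ^ 2 - q) := by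
    linear_combination (c ^ 2 - q) * h1 - b ^ 2 * h2
  have hoac : Odd (a * c) := hao.mul hco
  have hebd : Even (b * d) := hbe.mul_right d
  have hq0 : q ≠ 0 := hq.ne_zero
  have hq2 : (0:ℤ) < q ^ 2 := by positivity
  rcases hq.2.2 _ _ ⟨a ^ 2 + c ^ 2 - q, key⟩ with h | h
  · obtain ⟨k, hk⟩ := h
    have id1 : (a * c + b * d) ^ 2 + (a * d - b * c) ^ 2 = q ^ 2 := by
      linear_combination (c ^ 2 + d ^ 2) * h1 + q * h2
    have hsq : (a * c + b * d) ^ 2 = q ^ 2 * k ^ 2 := by rw [hk]; ring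
    have hkk : k ^ 2 ≤ 1 := by nlinarith [hsq, sq_nonneg (a * d - b * c)]
    have hk1 : k = -1 ∨ k = 0 ∨ k = 1 := by
      have l1 : k ≤ 1 := by nlinarith [sq_nonneg (k - 1)]
      have l2 : -1 ≤ k := by nlinarith [sq_nonneg (k + 1)]
      omega
    rcases hk1 with rfl | rfl | rfl
    · -- k = -1 : ad = bc, a*(-q) = c*q ⇒ c = -a, contradiction mod 4
      have hz : (a * d - b * c) ^ 2 = 0 := by nlinarith [hsq]
      have had : a * d - b * c = 0 := by
        exact pow_eq_zero_iff (n := 2) (by norm_num) |>.1 hz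
      have hac : q * (a * (-1) - c) = 0 := by linear_combination -(a * hk) + c * h1 + b * had
      have : a * (-1) - c = 0 := by
        rcases mul_eq_zero.1 hac with h' | h'
        · exact absurd h' hq0
        · exact h'
      have hc' : c = -a := by linarith
      omega
    · -- k = 0 : ac + bd = 0 but odd
      rw [mul_zero] at hk
      obtain ⟨e, he⟩ := hoac
      obtain ⟨f, hf⟩ := hebd
      omega
    · have hz : (a * d - b * c) ^ 2 = 0 := by nlinarith
      have had : a * d - b * c = 0 := by
        exact pow_eq_zero_iff (n := 2) (by norm_num) |>.1 hz
      have hac : q * (a * 1 - c) = 0 := by linear_combination -(a * hk) + c * h1 + b * had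
      have : a * 1 - c = 0 := by
        rcases mul_eq_zero.1 hac with h' | h'
        · exact absurd h' hq0
        · exact h'
      linarith
  · obtain ⟨k, hk⟩ := h
    have id2 : (a * c - b * d) ^ 2 + (a * d + b * c) ^ 2 = q ^ 2 := by
      linear_combination (c ^ 2 + d ^ 2) * h1 + q * h2
    have hsq : (a * c - b * d) ^ 2 = q ^ 2 * k ^ 2 := by rw [hk]; ring
    have hkk : k ^ 2 ≤ 1 := by nlinarith [hsq, sq_nonneg (a * d + b * c)]
    have hk1 : k = -1 ∨ k = 0 ∨ k = 1 := by
      have l1 : k ≤ 1 := by nlinarith [sq_nonneg (k - 1)]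
      have l2 : -1 ≤ k := by nlinarith [sq_nonneg (k + 1)]
      omega
    rcases hk1 with rfl | rfl | rfl
    · have hz : (a * d + b * c) ^ 2 = 0 := by nlinarith
      have had : a * d + b * c = 0 := by
        exact pow_eq_zero_iff (n := 2) (by norm_num) |>.1 hz
      have hac : q * (a * (-1) - c) = 0 := by linear_combination -(a * hk) + c * h1 - b * had
      have : a * (-1) - c = 0 := by
        rcases mul_eq_zero.1 hac with h' | h'
        · exact absurd h' hq0
        · exact h'
      have hc' : c = -a := by linarith
      omega
    · rw [mul_zero] at hk
      obtain ⟨e, he⟩ := hoac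
      obtain ⟨f, hf⟩ := hebd
      omega
    · have hz : (a * d + b * c) ^ 2 = 0 := by nlinarith
      have had : a * d + b * c = 0 := by
        exact pow_eq_zero_iff (n := 2) (by norm_num) |>.1 hz
      have hac : q * (a * 1 - c) = 0 := by linear_combination -(a * hk) + c * h1 - b * had
      have : a * 1 - c = 0 := by
        rcases mul_eq_zero.1 hac with h' | h'
        · exact absurd h' hq0
        · exact h'
      linarith

lemma primary_div {a b : ℤ}
    (h : ((⟨-2, 2⟩ : GaussianInt)) ∣ ((⟨a, b⟩ : GaussianInt) - 1)) :
    (4 ∣ a - 1 - b) ∧ (4 ∣ a - 1 + b) := by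
  obtain ⟨z, hz⟩ := h
  have hre := congrArg Zsqrtd.re hz
  have him := congrArg Zsqrtd.im hz
  simp only [Zsqrtd.re_sub, Zsqrtd.im_sub, Zsqrtd.re_one, Zsqrtd.im_one, Zsqrtd.re_mul,
    Zsqrtd.im_mul] at hre him
  constructor
  · exact ⟨-z.re, by omega⟩
  · exact ⟨-z.im, by omega⟩


lemma count_eq (hp2 : p ≠ 2) :
    (Nat.card {x : ZMod p × ZMod p | x.2 ^ 2 = x.1 ^ 3 - x.1} : ℤ)
      = p + ∑ x : ZMod p, quadraticChar (ZMod p) (x ^ 3 - x) := by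
  have e : {x : ZMod p × ZMod p | x.2 ^ 2 = x.1 ^ 3 - x.1}
      ≃ (Σ x : ZMod p, {y : ZMod p // y ^ 2 = x ^ 3 - x}) :=
    { toFun := fun z => ⟨z.1.1, z.1.2, z.2⟩
      invFun := fun s => ⟨(s.1, s.2.1), s.2.2⟩
      left_inv := fun z => rfl
      right_inv := fun s => rfl }
  rw [Nat.card_congr e, Nat.card_eq_fintype_card, Fintype.card_sigma]
  push_cast
  have hx : ∀ x : ZMod p, (Fintype.card {y : ZMod p // y ^ 2 = x ^ 3 - x} : ℤ)
      = quadraticChar (ZMod p) (x ^ 3 - x) + 1 := by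
    intro x
    have h := quadraticChar_card_sqrts (char_ne_two hp2) (x ^ 3 - x)
    rw [← h]
    congr 1
    rw [Set.toFinset_card]
    exact Fintype.card_congr (Equiv.subtypeEquivRight (fun _ => Iff.rfl))
  rw [Finset.sum_congr rfl (fun x _ => hx x), Finset.sum_add_distrib]
  simp [ZMod.card]
  ring


end PCVG

/-- For a prime `p ≡ 1 (mod 8)` written as `p = a² + b²` with `a` odd and the Gaussian
integer `π = a + bi` primary (`π ≡ 1 mod (-2+2i)`), the number of projective
`F_p`-points of `E_3 : Y² = X³ - X` equals `p + 1 - 2a`; moreover this count equals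
`p - 1` if and only if `p = 1 + 4a'²` for some integer `a'`. -/
theorem point_count_via_gaussian (p : ℕ) (hp : p.Prime) (h8 : p % 8 = 1)
    (a b : ℤ) (ha : Odd a) (hab : (p : ℤ) = a ^ 2 + b ^ 2)
    (hprimary : ((⟨-2, 2⟩ : GaussianInt)) ∣ ((⟨a, b⟩ : GaussianInt) - 1)) :
    ((Nat.card {x : ZMod p × ZMod p | x.2 ^ 2 = x.1 ^ 3 - x.1} : ℤ) + 1
        = (p : ℤ) + 1 - 2 * a) ∧
    (((Nat.card {x : ZMod p × ZMod p | x.2 ^ 2 = x.1 ^ 3 - x.1} : ℤ) + 1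
        = (p : ℤ) - 1) ↔ ∃ a' : ℤ, (p : ℤ) = 1 + 4 * a' ^ 2) := by
  haveI : Fact p.Prime := ⟨hp⟩
  have hp2 : p ≠ 2 := by omega
  have hpZ : Prime (p : ℤ) := Nat.prime_iff_prime_int.mp hp
  have hp8Z : (p : ℤ) % 8 = 1 := by omega
  -- b ≡ 0 mod 4
  obtain ⟨da, hda⟩ := PCVG.odd_sq a ha
  have hb4 : (4:ℤ) ∣ b := by
    rcases Int.even_or_odd b with hbe | hbo
    · obtain ⟨e, he⟩ := hbe
      rcases Int.even_or_odd e with ⟨f, hf⟩ | hoe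
      · exact ⟨f, by omega⟩
      · exfalso
        obtain ⟨de, hde⟩ := PCVG.odd_sq e hoe
        have : b ^ 2 = 4 * e ^ 2 := by rw [he]; ring
        omega
    · exfalso
      obtain ⟨db, hdb⟩ := PCVG.odd_sq b hbo
      omega
  have hbeven : Even b := by
    obtain ⟨t, ht⟩ := hb4
    exact ⟨2 * t, by omega⟩
  -- a ≡ 1 mod 4
  obtain ⟨hd1, hd2⟩ := PCVG.primary_div hprimary
  have ha4 : a % 4 = 1 := by
    obtain ⟨t1, ht1⟩ := hd1
    obtain ⟨t2, ht2⟩ := hd2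
    obtain ⟨t3, ht3⟩ := hb4
    omega
  -- character sum machinery
  obtain ⟨g, hg⟩ := quadraticChar_exists_neg_one (PCVG.char_ne_two hp2)
  have hkey := PCVG.key_identity hp2 h8 hg
  obtain ⟨k, hk⟩ := PCVG.S_mod8 hp2 h8
  set S := PCVG.J p (-1) with hSdef
  set T := PCVG.J p (-g) with hTdef
  have hT2even : Even (T ^ 2) := by
    refine ⟨2 * (p:ℤ) - 32 * k ^ 2 + 16 * k - 2, ?_⟩
    linear_combination hkey - (S + 8 * k - 2) * hk
  have hTeven : Even T := (Int.even_pow' (by norm_num : (2:ℕ) ≠ 0)).mp hT2even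
  obtain ⟨v, hv⟩ := hTeven
  set u : ℤ := 4 * k - 1 with hudef
  have hS2u : S = 2 * u := by omega
  have huv : u ^ 2 + v ^ 2 = (p : ℤ) := by
    have h4 : 4 * (u ^ 2 + v ^ 2) = 4 * (p : ℤ) := by
      linear_combination hkey - (S + 2 * u) * hS2u - (T + 2 * v) * hv
    linarith
  have huodd : Odd u := ⟨2 * k - 1, by omega⟩
  have hveven : Even v := by
    rcases Int.even_or_odd v with h | h
    · exact h
    · exfalso
      obtain ⟨du, hdu⟩ := PCVG.odd_sq u huodd
      obtain ⟨dv, hdv⟩ := PCVG.odd_sq v h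
      omega
  have hmu4 : (-u) % 4 = 1 := by omega
  have hmuodd : Odd (-u) := huodd.neg
  -- uniqueness gives a = -u
  have hau : a = -u :=
    PCVG.two_sq_unique hpZ hab.symm (by linear_combination huv) ha hmuodd hbeven hveven ha4 hmu4
  -- part 1
  have hN := PCVG.count_eq (p := p) hp2
  have hNS : (Nat.card {x : ZMod p × ZMod p | x.2 ^ 2 = x.1 ^ 3 - x.1} : ℤ) = (p : ℤ) + S := by
    rw [hN, hSdef, PCVG.J_neg_one_eq]
  have part1 : (Nat.card {x : ZMod p × ZMod p | x.2 ^ 2 = x.1 ^ 3 - x.1} : ℤ) + 1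
      = (p : ℤ) + 1 - 2 * a := by
    rw [hNS, hau]
    omega
  refine ⟨part1, ?_, ?_⟩
  · intro h
    have ha1 : a = 1 := by omega
    obtain ⟨t, ht⟩ := hb4
    exact ⟨2 * t, by rw [hab, ha1, ht]; ring⟩
  · rintro ⟨a', ha'⟩
    have h1 : (1:ℤ) ^ 2 + (2 * a') ^ 2 = (p : ℤ) := by linear_combination -ha'
    have : a = 1 := PCVG.two_sq_unique hpZ hab.symm h1 ha odd_one hbeven ⟨a', by ring⟩
      ha4 (by norm_num)
    omega
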